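/- arXiv:1309.7657 — 7 statements merged into one kernel-verified Lean document; each statement's English description precedes it below -/
import Mathlib

section
/- Let f_n : ℝ^m → [0,∞) be defined by f_n(x) = ‖A x‖^{2n} for A ∈ ℝ^{d×m} and n ∈ ℕ. Then f_n is twice differentiable and for all x ∈ ℝ^m, trace(Hess f_n(x)) ≤ 2n(2n−1) · ‖A‖_{HS}² · ‖A x‖^{2n−2}. -/
open Matrix Finset

section Aux

variable {d m : ℕ} (A : Matrix (Fin d) (Fin m) ℝ)

/-- The continuous linear map `x ↦ (A x)_i`. -/
noncomputable def Lmap (i : Fin d) : (Fin m → ℝ) →L[ℝ] ℝ :=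
  LinearMap.toContinuousLinearMap ((LinearMap.proj i).comp A.mulVecLin)

@[simp] lemma Lmap_apply (i : Fin d) (x : Fin m → ℝ) : Lmap A i x = A.mulVec x i := rfl

/-- `g x = ‖Ax‖²`. -/
noncomputable def gfun : (Fin m → ℝ) → ℝ := fun x => ∑ i, (A.mulVec x i) ^ 2

/-- Derivative of `g` at `y`. -/
noncomputable def Gmap (y : Fin m → ℝ) : (Fin m → ℝ) →L[ℝ] ℝ :=
  ∑ i, (2 * A.mulVec y i) • Lmap A i

lemma hasFDerivAt_gfun (y : Fin m → ℝ) : HasFDerivAt (gfun A) (Gmap A y) y := by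
  have h : ∀ i : Fin d,
      HasFDerivAt (fun x => (A.mulVec x i) ^ 2) ((2 * A.mulVec y i) • Lmap A i) y := by
    intro i
    have h1 : HasFDerivAt (fun x => A.mulVec x i) (Lmap A i) y := (Lmap A i).hasFDerivAt
    have h2 := (hasDerivAt_pow 2 (A.mulVec y i)).comp_hasFDerivAt y h1
    simp at h2
    exact h2
  exact HasFDerivAt.fun_sum (fun i _ => h i)

lemma contDiff_gfun : ContDiff ℝ ⊤ (gfun A) := by
  apply ContDiff.sum
  intro i _
  have : ContDiff ℝ ⊤ (fun x : Fin m → ℝ => A.mulVec x i) := (Lmap A i).contDiff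
  exact this.pow 2

lemma Gmap_single (y : Fin m → ℝ) (k : Fin m) :
    Gmap A y (Pi.single k 1) = 2 * ∑ i, A.mulVec y i * A i k := by
  simp [Gmap, ContinuousLinearMap.sum_apply, mul_sum]
  ring_nf

/-- First directional derivative of `(g)^n`. -/
lemma fderiv_gpow (n : ℕ) (y : Fin m → ℝ) (k : Fin m) :
    fderiv ℝ (fun x => gfun A x ^ n) y (Pi.single k 1)
      = (n : ℝ) * gfun A y ^ (n - 1) * (2 * ∑ i, A.mulVec y i * A i k) := by
  have h := (hasDerivAt_pow n (gfun A y)).comp_hasFDerivAt y (hasFDerivAt_gfun A y)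
  have h' : HasFDerivAt (fun x => gfun A x ^ n) (((n : ℝ) * gfun A y ^ (n - 1)) • Gmap A y) y := h
  rw [h'.fderiv]
  simp [Gmap_single, Function.comp, mul_assoc]


/-- The continuous linear map `y ↦ ∑ i, (Ay)_i * A i k` (i.e. `(AᵀA y)_k`). -/
noncomputable def Tmap (k : Fin m) : (Fin m → ℝ) →L[ℝ] ℝ :=
  ∑ i, (A i k) • Lmap A i

lemma Tmap_apply (k : Fin m) (y : Fin m → ℝ) :
    Tmap A k y = ∑ i, A.mulVec y i * A i k := by
  simp [Tmap, ContinuousLinearMap.sum_apply, mul_comm]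

lemma Tmap_single (k : Fin m) : Tmap A k (Pi.single k 1) = ∑ i, (A i k) ^ 2 := by
  rw [Tmap_apply]
  simp [sq]

/-- The second directional derivative of `g^n`. -/
lemma fderiv2_gpow (n : ℕ) (hn : 1 ≤ n) (x : Fin m → ℝ) (k : Fin m) :
    fderiv ℝ (fun y => fderiv ℝ (fun z => gfun A z ^ n) y (Pi.single k 1)) x (Pi.single k 1)
    = 2 * n * gfun A x ^ (n - 1) * (∑ i, (A i k) ^ 2)
      + 4 * n * ((n : ℝ) - 1) * gfun A x ^ (n - 2)
        * (∑ i, A.mulVec x i * A i k) ^ 2 := by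
  have e1 : (fun y => fderiv ℝ (fun z => gfun A z ^ n) y (Pi.single k 1))
      = fun y => (n : ℝ) * (gfun A y ^ (n - 1) * (2 * ∑ i, A.mulVec y i * A i k)) := by
    funext y
    rw [fderiv_gpow]
    ring
  rw [e1]
  -- derivatives of the two factors
  have hga : HasFDerivAt (fun y => gfun A y ^ (n - 1))
      ((((n - 1 : ℕ) : ℝ) * gfun A x ^ (n - 1 - 1)) • Gmap A x) x :=
    (hasDerivAt_pow (n - 1) (gfun A x)).comp_hasFDerivAt x (hasFDerivAt_gfun A x)
  have hT : HasFDerivAt (fun y => 2 * ∑ i, A.mulVec y i * A i k)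
      ((2 : ℝ) • Tmap A k) x := by
    have h0 : (fun y => 2 * ∑ i, A.mulVec y i * A i k) = ⇑((2 : ℝ) • Tmap A k) := by
      funext y; simp [Tmap_apply]
    rw [h0]
    exact ((2 : ℝ) • Tmap A k).hasFDerivAt
  have hmul : HasFDerivAt (fun y => (n : ℝ) * (gfun A y ^ (n - 1) * (2 * ∑ i, A.mulVec y i * A i k))) _ x :=
    (hga.mul hT).const_mul (n : ℝ)
  rw [hmul.fderiv]
  have hG : Gmap A x (Pi.single k 1) = 2 * ∑ i, A.mulVec x i * A i k := Gmap_single A x k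
  have hnn : ((n - 1 : ℕ) : ℝ) = (n : ℝ) - 1 := by
    rw [Nat.cast_sub hn]; simp
  have hnn2 : n - 1 - 1 = n - 2 := by omega
  simp only [ContinuousLinearMap.smul_apply, ContinuousLinearMap.add_apply,
    ContinuousLinearMap.coe_smul', Pi.smul_apply, Tmap_single, hG, hnn, hnn2,
    smul_eq_mul]
  ring

end Aux

/-- For `f_n(x) = ‖Ax‖^(2n)` with `n ≥ 1`, the map `f_n` is twice (continuously)
differentiable and `trace(Hess f_n(x)) ≤ 2n(2n−1) ‖A‖_HS² ‖Ax‖^(2n−2)` for all `x`. -/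
theorem trace_hessian_norm_pow_le
    (d m n : ℕ) (hn : 1 ≤ n) (A : Matrix (Fin d) (Fin m) ℝ) :
    ContDiff ℝ 2 (fun x : Fin m → ℝ =>
      (Real.sqrt (∑ i, (A.mulVec x i) ^ 2)) ^ (2 * n)) ∧
    ∀ x : Fin m → ℝ,
      (∑ i : Fin m,
        fderiv ℝ (fun y =>
          fderiv ℝ (fun z : Fin m → ℝ =>
            (Real.sqrt (∑ i, (A.mulVec z i) ^ 2)) ^ (2 * n)) y (Pi.single i 1))
          x (Pi.single i 1))
      ≤ (2 * n) * (2 * n - 1) * (Real.sqrt (∑ i, ∑ j, (A i j) ^ 2)) ^ 2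
          * (Real.sqrt (∑ i, (A.mulVec x i) ^ 2)) ^ (2 * n - 2) := by
  -- rewrite the function without square roots
  have key : (fun x : Fin m → ℝ => (Real.sqrt (∑ i, (A.mulVec x i) ^ 2)) ^ (2 * n))
      = fun x => gfun A x ^ n := by
    funext x
    rw [pow_mul, Real.sq_sqrt (by positivity : (0:ℝ) ≤ ∑ i, (A.mulVec x i) ^ 2)]
    rfl
  simp only [key]
  constructor
  · exact ((contDiff_gfun A).pow n).of_le le_top
  intro x
  have hg0 : (0:ℝ) ≤ gfun A x := by
    apply Finset.sum_nonneg; intro i _; positivity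
  have hA0 : (0:ℝ) ≤ ∑ i, ∑ j, (A i j) ^ 2 := by
    apply Finset.sum_nonneg; intro i _; positivity
  -- rewrite each summand via fderiv2_gpow
  have e2 : ∀ k : Fin m,
      fderiv ℝ (fun y => fderiv ℝ (fun z => gfun A z ^ n) y (Pi.single k 1)) x (Pi.single k 1)
      = 2 * n * gfun A x ^ (n - 1) * (∑ i, (A i k) ^ 2)
        + 4 * n * ((n : ℝ) - 1) * gfun A x ^ (n - 2)
          * (∑ i, A.mulVec x i * A i k) ^ 2 := fun k => fderiv2_gpow A n hn x k
  rw [Finset.sum_congr rfl (fun k _ => e2 k), Finset.sum_add_distrib]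
  -- the Hilbert–Schmidt norm squared
  have hHS : (Real.sqrt (∑ i, ∑ j, (A i j) ^ 2)) ^ 2 = ∑ i, ∑ j, (A i j) ^ 2 :=
    Real.sq_sqrt hA0
  have hpow : (Real.sqrt (∑ i, (A.mulVec x i) ^ 2)) ^ (2 * n - 2) = gfun A x ^ (n - 1) := by
    have : 2 * n - 2 = 2 * (n - 1) := by omega
    rw [this, pow_mul,
      Real.sq_sqrt (by positivity : (0:ℝ) ≤ ∑ i, (A.mulVec x i) ^ 2)]
    rfl
  rw [hHS, hpow]
  have hsum1 : ∑ k : Fin m, 2 * (n:ℝ) * gfun A x ^ (n - 1) * (∑ i, (A i k) ^ 2)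
      = 2 * n * gfun A x ^ (n - 1) * ∑ i, ∑ j, (A i j) ^ 2 := by
    rw [← Finset.mul_sum, Finset.sum_comm]
  rw [hsum1]
  -- Cauchy–Schwarz bound on the second sum
  have hCS : ∑ k : Fin m, (∑ i, A.mulVec x i * A i k) ^ 2
      ≤ gfun A x * ∑ i, ∑ j, (A i j) ^ 2 := by
    have h1 : ∀ k : Fin m, (∑ i, A.mulVec x i * A i k) ^ 2
        ≤ gfun A x * ∑ i, (A i k) ^ 2 := fun k =>
      Finset.sum_mul_sq_le_sq_mul_sq Finset.univ _ _
    calc ∑ k : Fin m, (∑ i, A.mulVec x i * A i k) ^ 2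
        ≤ ∑ k : Fin m, gfun A x * ∑ i, (A i k) ^ 2 :=
          Finset.sum_le_sum (fun k _ => h1 k)
      _ = gfun A x * ∑ i, ∑ j, (A i j) ^ 2 := by
          rw [← Finset.mul_sum, Finset.sum_comm]
  have hc : (0:ℝ) ≤ 4 * n * ((n : ℝ) - 1) * gfun A x ^ (n - 2) := by
    have h1 : (0:ℝ) ≤ (n:ℝ) - 1 := by
      have : (1:ℝ) ≤ (n:ℝ) := by exact_mod_cast hn
      linarith
    have h2 : (0:ℝ) ≤ 4 * (n:ℝ) := by positivity
    exact mul_nonneg (mul_nonneg h2 h1) (pow_nonneg hg0 _)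
  have hstep : ∑ k : Fin m, 4 * (n:ℝ) * ((n : ℝ) - 1) * gfun A x ^ (n - 2)
        * (∑ i, A.mulVec x i * A i k) ^ 2
      ≤ 4 * n * ((n : ℝ) - 1) * (gfun A x ^ (n - 1) * ∑ i, ∑ j, (A i j) ^ 2) := by
    rw [← Finset.mul_sum]
    rcases eq_or_lt_of_le hn with h1 | h2
    · simp [← h1]
    · have hg_pow : gfun A x ^ (n - 2) * gfun A x = gfun A x ^ (n - 1) := by
        rw [← pow_succ]
        congr 1
        omega
      calc 4 * (n:ℝ) * ((n : ℝ) - 1) * gfun A x ^ (n - 2)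
            * ∑ k : Fin m, (∑ i, A.mulVec x i * A i k) ^ 2
          ≤ 4 * n * ((n : ℝ) - 1) * gfun A x ^ (n - 2)
            * (gfun A x * ∑ i, ∑ j, (A i j) ^ 2) := by
            exact mul_le_mul_of_nonneg_left hCS hc
        _ = 4 * n * ((n : ℝ) - 1) * (gfun A x ^ (n - 1) * ∑ i, ∑ j, (A i j) ^ 2) := by
            rw [← hg_pow]; ring
  calc (2 * (n:ℝ) * gfun A x ^ (n - 1) * ∑ i, ∑ j, (A i j) ^ 2)
        + ∑ k : Fin m, 4 * (n:ℝ) * ((n : ℝ) - 1) * gfun A x ^ (n - 2)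
            * (∑ i, A.mulVec x i * A i k) ^ 2
      ≤ (2 * n * gfun A x ^ (n - 1) * ∑ i, ∑ j, (A i j) ^ 2)
        + 4 * n * ((n : ℝ) - 1) * (gfun A x ^ (n - 1) * ∑ i, ∑ j, (A i j) ^ 2) := by
        linarith [hstep]
    _ = (2 * n) * (2 * n - 1) * (∑ i, ∑ j, (A i j) ^ 2) * gfun A x ^ (n - 1) := by ring
end

section
/- Let (Ω,F,ℙ) be a probability space, (E,𝓔) a measurable space, V : E → [0,∞] measurable, Z : ℕ₀ × Ω → E a stochastic process, γ_n ∈ [0,∞), δ_n ∈ (0,∞], and Ω_n ∈ F satisfy Ω_0 = Ω, Ω_n \ Ω_{n+1} ⊆ {V(Z_n) > δ_n}, and E[1_{Ω_{n+1}} V(Z_{n+1})] ≤ γ_n · E[1_{Ω_n} V(Z_n)] for all n ∈ ℕ₀. Then for all n ∈ ℕ₀: (i) E[1_{Ω_n} V(Z_n)] ≤ (∏_{k=0}^{n−1} γ_k) · E[V(Z_0)], and (ii) ℙ[(Ω_n)^c] ≤ (∑_{k=0}^{n−1} (∏_{l=0}^{k−1} γ_l)/δ_k) · E[V(Z_0)].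 -/
open MeasureTheory ENNReal NNReal

/-- Stability estimate: if `Ω_0 = Ω`, `Ω_n \ Ω_{n+1} ⊆ {V(Z_n) > δ_n}` and
`E[1_{Ω_{n+1}} V(Z_{n+1})] ≤ γ_n E[1_{Ω_n} V(Z_n)]` for all `n`, then
`E[1_{Ω_n} V(Z_n)] ≤ (∏_{k<n} γ_k) E[V(Z_0)]` and
`ℙ[(Ω_n)ᶜ] ≤ (∑_{k<n} (∏_{l<k} γ_l)/δ_k) E[V(Z_0)]`. -/
theorem indicator_lyapunov_stability
    {Ω E : Type*} [MeasurableSpace Ω] [MeasurableSpace E]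
    (μ : Measure Ω) [IsProbabilityMeasure μ]
    (V : E → ℝ≥0∞) (hV : Measurable V)
    (Z : ℕ → Ω → E) (hZ : ∀ n, Measurable (Z n))
    (γ : ℕ → ℝ≥0) (δ : ℕ → ℝ≥0∞) (hδ : ∀ n, 0 < δ n)
    (S : ℕ → Set Ω) (hS : ∀ n, MeasurableSet (S n)) (hS0 : S 0 = Set.univ)
    (hdiff : ∀ n, S n \ S (n + 1) ⊆ {ω | δ n < V (Z n ω)})
    (hrec : ∀ n,
      ∫⁻ ω, (S (n + 1)).indicator (fun ω => V (Z (n + 1) ω)) ω ∂μ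
        ≤ (γ n : ℝ≥0∞) * ∫⁻ ω, (S n).indicator (fun ω => V (Z n ω)) ω ∂μ) :
    ∀ n : ℕ,
      (∫⁻ ω, (S n).indicator (fun ω => V (Z n ω)) ω ∂μ
        ≤ (∏ k ∈ Finset.range n, (γ k : ℝ≥0∞)) * ∫⁻ ω, V (Z 0 ω) ∂μ) ∧
      μ (S n)ᶜ
        ≤ (∑ k ∈ Finset.range n, (∏ l ∈ Finset.range k, (γ l : ℝ≥0∞)) / δ k)
            * ∫⁻ ω, V (Z 0 ω) ∂μ := by
  intro n
  induction n with
  | zero => constructor <;> simp [hS0]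
  | succ n ih =>
    obtain ⟨ih1, ih2⟩ := ih
    have h1 : ∫⁻ ω, (S (n+1)).indicator (fun ω => V (Z (n+1) ω)) ω ∂μ
        ≤ (∏ k ∈ Finset.range (n+1), (γ k : ℝ≥0∞)) * ∫⁻ ω, V (Z 0 ω) ∂μ := by
      calc ∫⁻ ω, (S (n+1)).indicator (fun ω => V (Z (n+1) ω)) ω ∂μ
          ≤ (γ n : ℝ≥0∞) * ∫⁻ ω, (S n).indicator (fun ω => V (Z n ω)) ω ∂μ := hrec n
        _ ≤ (γ n : ℝ≥0∞) * ((∏ k ∈ Finset.range n, (γ k : ℝ≥0∞)) * ∫⁻ ω, V (Z 0 ω) ∂μ) :=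
            mul_le_mul_right ih1 _
        _ = _ := by rw [Finset.prod_range_succ]; ring
    refine ⟨h1, ?_⟩
    have hsub : (S (n+1))ᶜ ⊆ (S n)ᶜ ∪ (S n \ S (n+1)) := by
      intro ω hω
      by_cases h : ω ∈ S n
      · exact Or.inr ⟨h, hω⟩
      · exact Or.inl h
    have hdm : μ (S n \ S (n+1)) ≤
        ((∏ l ∈ Finset.range n, (γ l : ℝ≥0∞)) / δ n) * ∫⁻ ω, V (Z 0 ω) ∂μ := by
      rcases eq_top_or_lt_top (δ n) with hδt | hδt
      · have hempty : S n \ S (n+1) = ∅ := by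
          rw [Set.eq_empty_iff_forall_notMem]
          intro ω hω
          have := hdiff n hω
          simp only [Set.mem_setOf_eq, hδt] at this
          exact (not_top_lt this).elim
        simp [hempty]
      · have hmark : μ (S n \ S (n+1)) * δ n
            ≤ ∫⁻ ω, (S n).indicator (fun ω => V (Z n ω)) ω ∂μ := by
          rw [mul_comm]
          calc δ n * μ (S n \ S (n+1))
              = ∫⁻ _ω in S n \ S (n+1), δ n ∂μ := by rw [setLIntegral_const, mul_comm]
            _ ≤ ∫⁻ ω in S n \ S (n+1), V (Z n ω) ∂μ := by
                refine setLIntegral_mono (hV.comp (hZ n)) fun ω hω => ?_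
                exact (hdiff n hω).le
            _ ≤ ∫⁻ ω in S n, V (Z n ω) ∂μ :=
                lintegral_mono_set Set.diff_subset
            _ = ∫⁻ ω, (S n).indicator (fun ω => V (Z n ω)) ω ∂μ := by
                rw [lintegral_indicator (hS n)]
        calc μ (S n \ S (n+1))
            ≤ (∫⁻ ω, (S n).indicator (fun ω => V (Z n ω)) ω ∂μ) / δ n :=
              (ENNReal.le_div_iff_mul_le (Or.inl (hδ n).ne') (Or.inl hδt.ne)).mpr hmark
          _ ≤ ((∏ l ∈ Finset.range n, (γ l : ℝ≥0∞)) * ∫⁻ ω, V (Z 0 ω) ∂μ) / δ n :=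
              ENNReal.div_le_div_right ih1 _
          _ = ((∏ l ∈ Finset.range n, (γ l : ℝ≥0∞)) / δ n) * ∫⁻ ω, V (Z 0 ω) ∂μ := by
              rw [div_eq_mul_inv, div_eq_mul_inv]; ring
    calc μ (S (n+1))ᶜ ≤ μ ((S n)ᶜ ∪ (S n \ S (n+1))) := measure_mono hsub
      _ ≤ μ (S n)ᶜ + μ (S n \ S (n+1)) := measure_union_le _ _
      _ ≤ (∑ k ∈ Finset.range n, (∏ l ∈ Finset.range k, (γ l : ℝ≥0∞)) / δ k)
            * ∫⁻ ω, V (Z 0 ω) ∂μ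
          + ((∏ l ∈ Finset.range n, (γ l : ℝ≥0∞)) / δ n) * ∫⁻ ω, V (Z 0 ω) ∂μ :=
          add_le_add ih2 hdm
      _ = _ := by rw [Finset.sum_range_succ, add_mul]
end

section
/- Under the assumptions of the two-sided stability setting, if additionally V̄ : E → [0,∞] is measurable with V̄ ≤ V pointwise and p ∈ [1,∞], then E[V̄(Z_n)] ≤ (∏_{k=0}^{n−1} γ_k)·E[V(Z_0)] + ‖V̄(Z_n)‖_{L^p} · [(∑_{k=0}^{n−1}(∏_{l=0}^{k−1} γ_l)/δ_k)·E[V(Z_0)]]^{1−1/p}. -/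
open MeasureTheory ENNReal NNReal

/-- The `L^p` "norm" of a `[0,∞]`-valued function, `p ∈ [1,∞]`. -/
noncomputable def lpNormENNReal {Ω : Type*} [MeasurableSpace Ω] (μ : Measure Ω)
    (p : ℝ≥0∞) (X : Ω → ℝ≥0∞) : ℝ≥0∞ :=
  if p = ∞ then essSup X μ else (∫⁻ ω, X ω ^ p.toReal ∂μ) ^ (1 / p.toReal)

/-- Hölder-type bound: `∫_A f ≤ ‖f‖_p μ(A)^(1-1/p)`. -/
theorem holder_aux {Ω : Type*} [MeasurableSpace Ω] (μ : Measure Ω)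
    (f : Ω → ℝ≥0∞) (hf : Measurable f) (A : Set Ω) (hA : MeasurableSet A)
    (p : ℝ≥0∞) (hp : 1 ≤ p) :
    ∫⁻ ω in A, f ω ∂μ
      ≤ lpNormENNReal μ p f * μ A ^ (if p = ∞ then (1 : ℝ) else 1 - 1 / p.toReal) := by
  by_cases hptop : p = ∞
  · subst hptop
    rw [lpNormENNReal, if_pos rfl, if_pos rfl, ENNReal.rpow_one]
    calc ∫⁻ ω in A, f ω ∂μ ≤ ∫⁻ _ in A, essSup f μ ∂μ :=
          lintegral_mono_ae (ae_restrict_of_ae (ae_le_essSup f))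
      _ = essSup f μ * μ A := setLIntegral_const _ _
  · rcases eq_or_lt_of_le hp with hp1 | hp1
    · -- p = 1
      have hpr : p.toReal = 1 := by rw [← hp1]; simp
      simp only [lpNormENNReal, if_neg hptop, hpr, ENNReal.rpow_one, one_div_one, sub_self,
        ENNReal.rpow_zero, mul_one]
      exact setLIntegral_le_lintegral _ _
    · -- 1 < p < ∞
      have hpr : 1 < p.toReal := by
        have := (ENNReal.toReal_lt_toReal (by simp) hptop).mpr hp1
        simpa using this
      set pr := p.toReal
      set q := Real.conjExponent pr with hq
      have hpq : pr.HolderConjugate q := Real.HolderConjugate.conjExponent hpr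
      have hg : Measurable (A.indicator (fun _ => (1 : ℝ≥0∞))) :=
        measurable_const.indicator hA
      have key := ENNReal.lintegral_mul_le_Lp_mul_Lq μ hpq hf.aemeasurable hg.aemeasurable
      have h1 : ∀ ω, (f * A.indicator (fun _ => (1 : ℝ≥0∞))) ω = A.indicator f ω := by
        intro ω
        by_cases hω : ω ∈ A <;> simp [Set.indicator, hω]
      have h2 : (∫⁻ a, (A.indicator (fun _ => (1 : ℝ≥0∞))) a ^ q ∂μ) = μ A := by
        have : ∀ a, (A.indicator (fun _ => (1 : ℝ≥0∞))) a ^ q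
            = A.indicator (fun _ => (1 : ℝ≥0∞)) a := by
          intro a
          by_cases ha : a ∈ A <;>
            simp [Set.indicator, ha, ENNReal.zero_rpow_of_pos hpq.symm.pos]
        simp only [this]
        rw [lintegral_indicator hA]
        simp
      simp only [h1] at key
      rw [lintegral_indicator hA, h2] at key
      have h3 : 1 / q = 1 - 1 / pr := by
        have := hpq.inv_add_inv_eq_one
        rw [one_div, one_div]
        linarith
      rw [h3] at key
      simpa [lpNormENNReal, if_neg hptop] using key

/-- Under the two-sided stability assumptions, for measurable `V̄ ≤ V` and `p ∈ [1,∞]`,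
`E[V̄(Z_n)] ≤ (∏_{k<n} γ_k) E[V(Z_0)]
  + ‖V̄(Z_n)‖_{L^p} ((∑_{k<n} (∏_{l<k} γ_l)/δ_k) E[V(Z_0)])^(1−1/p)`. -/
theorem lyapunov_stability_ebar
    {Ω E : Type*} [MeasurableSpace Ω] [MeasurableSpace E]
    (μ : Measure Ω) [IsProbabilityMeasure μ]
    (V : E → ℝ≥0∞) (hV : Measurable V)
    (Vbar : E → ℝ≥0∞) (hVbar : Measurable Vbar) (hle : ∀ x, Vbar x ≤ V x)
    (Z : ℕ → Ω → E) (hZ : ∀ n, Measurable (Z n))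
    (γ : ℕ → ℝ≥0) (δ : ℕ → ℝ≥0∞) (hδ : ∀ n, 0 < δ n)
    (S : ℕ → Set Ω) (hS : ∀ n, MeasurableSet (S n)) (hS0 : S 0 = Set.univ)
    (hdiff : ∀ n, S n \ S (n + 1) ⊆ {ω | δ n < V (Z n ω)})
    (hrec : ∀ n,
      ∫⁻ ω, (S (n + 1)).indicator (fun ω => V (Z (n + 1) ω)) ω ∂μ
        ≤ (γ n : ℝ≥0∞) * ∫⁻ ω, (S n).indicator (fun ω => V (Z n ω)) ω ∂μ)
    (p : ℝ≥0∞) (hp : 1 ≤ p) :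
    ∀ n : ℕ,
      ∫⁻ ω, Vbar (Z n ω) ∂μ
        ≤ (∏ k ∈ Finset.range n, (γ k : ℝ≥0∞)) * ∫⁻ ω, V (Z 0 ω) ∂μ
          + lpNormENNReal μ p (fun ω => Vbar (Z n ω))
            * ((∑ k ∈ Finset.range n, (∏ l ∈ Finset.range k, (γ l : ℝ≥0∞)) / δ k)
                * ∫⁻ ω, V (Z 0 ω) ∂μ) ^ (if p = ∞ then (1 : ℝ) else 1 - 1 / p.toReal) := by
  intro n
  set EV0 := ∫⁻ ω, V (Z 0 ω) ∂μ with hEV0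
  -- the key recursive bound
  have hA : ∀ m, ∫⁻ ω, (S m).indicator (fun ω => V (Z m ω)) ω ∂μ
      ≤ (∏ k ∈ Finset.range m, (γ k : ℝ≥0∞)) * EV0 := by
    intro m
    induction m with
    | zero => simp [hS0, hEV0]
    | succ m ih =>
      calc ∫⁻ ω, (S (m + 1)).indicator (fun ω => V (Z (m + 1) ω)) ω ∂μ
          ≤ (γ m : ℝ≥0∞) * ∫⁻ ω, (S m).indicator (fun ω => V (Z m ω)) ω ∂μ := hrec m
        _ ≤ (γ m : ℝ≥0∞) * ((∏ k ∈ Finset.range m, (γ k : ℝ≥0∞)) * EV0) :=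
            mul_le_mul_right ih _
        _ = (∏ k ∈ Finset.range (m + 1), (γ k : ℝ≥0∞)) * EV0 := by
            rw [Finset.prod_range_succ]; ring
  -- bound on the measure of each difference set
  have hdiffb : ∀ m, μ (S m \ S (m + 1))
      ≤ (∏ l ∈ Finset.range m, (γ l : ℝ≥0∞)) / δ m * EV0 := by
    intro m
    by_cases hdm : δ m = ∞
    · have hsub : S m \ S (m + 1) ⊆ ∅ := by
        intro ω hω
        have := hdiff m hω
        simp only [Set.mem_setOf_eq, hdm] at this
        exact absurd this (not_top_lt)
      have h0 : μ (S m \ S (m + 1)) ≤ μ (∅ : Set Ω) := measure_mono hsub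
      rw [measure_empty] at h0
      exact h0.trans zero_le
    · set f := (S m).indicator (fun ω => V (Z m ω)) with hf
      have hfm : AEMeasurable f μ := ((hV.comp (hZ m)).indicator (hS m)).aemeasurable
      have hsub : S m \ S (m + 1) ⊆ {ω | δ m ≤ f ω} := by
        intro ω hω
        have h1 := hdiff m hω
        simp only [Set.mem_setOf_eq] at h1 ⊢
        rw [hf, Set.indicator_of_mem hω.1]
        exact h1.le
      calc μ (S m \ S (m + 1)) ≤ μ {ω | δ m ≤ f ω} := measure_mono hsub
        _ ≤ (∫⁻ ω, f ω ∂μ) / δ m := meas_ge_le_lintegral_div hfm (hδ m).ne' hdm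
        _ ≤ ((∏ l ∈ Finset.range m, (γ l : ℝ≥0∞)) * EV0) / δ m :=
            ENNReal.div_le_div_right (hA m) _
        _ = (∏ l ∈ Finset.range m, (γ l : ℝ≥0∞)) / δ m * EV0 := by
            rw [div_eq_mul_inv, div_eq_mul_inv]; ring
  -- bound on the measure of the complement
  have hC : ∀ m, μ (S m)ᶜ
      ≤ (∑ k ∈ Finset.range m, (∏ l ∈ Finset.range k, (γ l : ℝ≥0∞)) / δ k) * EV0 := by
    intro m
    induction m with
    | zero => simp [hS0]
    | succ m ih =>
      have hsub : (S (m + 1))ᶜ ⊆ (S m)ᶜ ∪ (S m \ S (m + 1)) := by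
        intro ω hω
        by_cases hω' : ω ∈ S m
        · exact Or.inr ⟨hω', hω⟩
        · exact Or.inl hω'
      calc μ (S (m + 1))ᶜ ≤ μ ((S m)ᶜ ∪ (S m \ S (m + 1))) := measure_mono hsub
        _ ≤ μ (S m)ᶜ + μ (S m \ S (m + 1)) := measure_union_le _ _
        _ ≤ (∑ k ∈ Finset.range m, (∏ l ∈ Finset.range k, (γ l : ℝ≥0∞)) / δ k) * EV0
            + (∏ l ∈ Finset.range m, (γ l : ℝ≥0∞)) / δ m * EV0 := add_le_add ih (hdiffb m)
        _ = (∑ k ∈ Finset.range (m + 1), (∏ l ∈ Finset.range k, (γ l : ℝ≥0∞)) / δ k) * EV0 := by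
            rw [Finset.sum_range_succ, add_mul]
  -- exponent nonnegative
  have he : 0 ≤ (if p = ∞ then (1 : ℝ) else 1 - 1 / p.toReal) := by
    split_ifs with h
    · norm_num
    · have h1 : 1 ≤ p.toReal := by
        rw [← ENNReal.toReal_one]
        exact ENNReal.toReal_mono h hp
      have h2 : 1 / p.toReal ≤ 1 := by
        rw [div_le_one (by linarith)]
        linarith
      linarith
  -- split the integral
  rw [← lintegral_add_compl (fun ω => Vbar (Z n ω)) (hS n)]
  apply add_le_add
  · calc ∫⁻ ω in S n, Vbar (Z n ω) ∂μ ≤ ∫⁻ ω in S n, V (Z n ω) ∂μ :=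
        lintegral_mono fun ω => hle _
      _ = ∫⁻ ω, (S n).indicator (fun ω => V (Z n ω)) ω ∂μ := (lintegral_indicator (hS n) _).symm
      _ ≤ (∏ k ∈ Finset.range n, (γ k : ℝ≥0∞)) * EV0 := hA n
  · calc ∫⁻ ω in (S n)ᶜ, Vbar (Z n ω) ∂μ
        ≤ lpNormENNReal μ p (fun ω => Vbar (Z n ω))
          * μ (S n)ᶜ ^ (if p = ∞ then (1 : ℝ) else 1 - 1 / p.toReal) :=
          holder_aux μ _ (hVbar.comp (hZ n)) _ (hS n).compl p hp
      _ ≤ lpNormENNReal μ p (fun ω => Vbar (Z n ω))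
          * ((∑ k ∈ Finset.range n, (∏ l ∈ Finset.range k, (γ l : ℝ≥0∞)) / δ k) * EV0)
            ^ (if p = ∞ then (1 : ℝ) else 1 - 1 / p.toReal) :=
          mul_le_mul_right (ENNReal.rpow_le_rpow (hC n) he) _
end

section
/- Let q ∈ [1,∞), d, m ∈ ℕ, μ : ℝ^d → ℝ^d and σ : ℝ^d → ℝ^{d×m} be functions, and for t ∈ (0,∞), x ∈ ℝ^d, y ∈ ℝ^m define Φ(x,t,y) = (μ(x)t + σ(x)y)/(1 + ‖μ(x)t + σ(x)y‖^q). Then for all x, t, y, ‖((∂/∂t)Φ)(x,t,y) − μ(x)‖ ≤ (q+1)·‖μ(x)t + σ(x)y‖^q · ‖μ(x)‖. -/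
open Real Finset Asymptotics

private lemma sqrt_sum_sq_eq_norm {d : ℕ} (v : Fin d → ℝ) :
    Real.sqrt (∑ i, v i ^ 2) = ‖(WithLp.equiv 2 (Fin d → ℝ)).symm v‖ := by
  rw [EuclideanSpace.norm_eq]
  congr 1
  apply Finset.sum_congr rfl
  intro i _
  rw [Real.norm_eq_abs, sq_abs]
  rfl

private lemma hasDerivAt_sub_mul {b : ℝ → ℝ} {t : ℝ} (hb : ContinuousAt b t) :
    HasDerivAt (fun s => (s - t) * b s) (b t) t := by
  rw [hasDerivAt_iff_isLittleO]
  have h1 : (fun s : ℝ => (s - t) * (b s - b t)) =o[nhds t] (fun s : ℝ => (s - t) * 1) := by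
    apply (isBigO_refl (fun s : ℝ => s - t) (nhds t)).mul_isLittleO
    rw [Asymptotics.isLittleO_one_iff]
    have := hb.tendsto
    rw [← sub_self (b t)] at *
    exact Filter.Tendsto.sub_const hb.tendsto (b t)
  have h2 : (fun s : ℝ => (s - t) * (b s - b t))
      = fun s : ℝ => (s - t) * b s - ((t - t) * b t) - (s - t) • b t := by
    funext s; simp; ring
  simpa [h2] using h1

private theorem main_aux {d : ℕ} (q : ℝ) (hq : 1 ≤ q) (c b : Fin d → ℝ) (t : ℝ) :
    Real.sqrt (∑ i,
        ((deriv (fun s : ℝ =>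
            (1 + Real.sqrt (∑ k, (c k * s + b k) ^ 2) ^ q)⁻¹
              • (fun k => c k * s + b k) : ℝ → (Fin d → ℝ)) t) i
          - c i) ^ 2)
      ≤ (q + 1) * Real.sqrt (∑ k, (c k * t + b k) ^ 2) ^ q
          * Real.sqrt (∑ i, c i ^ 2) := by
  set S : ℝ → ℝ := fun s => ∑ k, (c k * s + b k) ^ 2 with hSdef
  set g : ℝ → ℝ := fun s => Real.sqrt (S s) with hgdef
  have hS0 : 0 ≤ S t := Finset.sum_nonneg fun k _ => sq_nonneg _
  have hg0 : 0 ≤ g t := Real.sqrt_nonneg _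
  by_cases hS : S t = 0
  · -- degenerate case : u t = 0
    have hzero : ∀ k, c k * t + b k = 0 := by
      intro k
      have := (Finset.sum_eq_zero_iff_of_nonneg (fun k _ => sq_nonneg (c k * t + b k))).1 hS
      exact pow_eq_zero_iff (n := 2) (by norm_num) |>.1 (this k (Finset.mem_univ k))
    have hgt : g t = 0 := by simp [hgdef, hS]
    have hht : (1 + g t ^ q)⁻¹ = 1 := by
      rw [hgt, Real.zero_rpow (by linarith : q ≠ 0)]; norm_num
    have hgcont : Continuous g := by
      apply Real.continuous_sqrt.comp
      apply continuous_finset_sum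
      intro k _
      fun_prop
    have hcont : ContinuousAt (fun s => (1 + g s ^ q)⁻¹) t := by
      apply ContinuousAt.inv₀
      · exact continuousAt_const.add
          ((Real.continuousAt_rpow_const (g t) q (Or.inr (by linarith))).comp
            hgcont.continuousAt)
      · rw [hgt, Real.zero_rpow (by linarith : q ≠ 0)]; norm_num
    have hΦ : HasDerivAt (fun s : ℝ =>
        (1 + Real.sqrt (∑ k, (c k * s + b k) ^ 2) ^ q)⁻¹
          • (fun k => c k * s + b k) : ℝ → (Fin d → ℝ)) c t := by
      apply hasDerivAt_pi.2
      intro i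
      show HasDerivAt (fun s => (1 + g s ^ q)⁻¹ * (c i * s + b i)) (c i) t
      have heq : (fun s => (1 + g s ^ q)⁻¹ * (c i * s + b i))
          = fun s => (s - t) * ((1 + g s ^ q)⁻¹ * c i) := by
        funext s
        have hb : b i = -(c i * t) := by have := hzero i; linarith
        rw [hb]; ring
      rw [heq]
      have := hasDerivAt_sub_mul (b := fun s => (1 + g s ^ q)⁻¹ * c i) (hcont.mul continuousAt_const)
      simpa [hht] using this
    rw [hΦ.deriv]
    simp only [sub_self]
    have : ∑ i : Fin d, ((0:ℝ)) ^ 2 = 0 := by simp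
    rw [show (∑ i : Fin d, ((0:ℝ)) ^ 2) = 0 from this, Real.sqrt_zero]
    positivity
  · -- nondegenerate case
    have hSpos : 0 < S t := lt_of_le_of_ne hS0 (Ne.symm hS)
    have hgpos : 0 < g t := Real.sqrt_pos.2 hSpos
    set P : ℝ := ∑ k, (c k * t + b k) * c k with hPdef
    have hu : ∀ i, HasDerivAt (fun s => c i * s + b i) (c i) t := by
      intro i
      simpa using ((hasDerivAt_id t).const_mul (c i)).add_const (b i)
    have hSder : HasDerivAt S (2 * P) t := by
      have : HasDerivAt S (∑ k, (2:ℕ) * (c k * t + b k) ^ 1 * c k) t := by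
        apply HasDerivAt.fun_sum
        intro k _
        exact (hu k).pow 2
      convert this using 1
      rw [hPdef, Finset.mul_sum]
      apply Finset.sum_congr rfl
      intro k _; push_cast; ring
    have hgder : HasDerivAt g (P / g t) t := by
      have := (Real.hasDerivAt_sqrt hS).comp t hSder
      refine this.congr_deriv ?_
      rw [hgdef]
      field_simp
    have hrpow : HasDerivAt (fun s => g s ^ q) (q * g t ^ (q - 1) * (P / g t)) t :=
      (Real.hasDerivAt_rpow_const (Or.inl hgpos.ne')).comp t hgder
    have h1pos : 0 < 1 + g t ^ q := by
      have : 0 ≤ g t ^ q := Real.rpow_nonneg hg0 q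
      linarith
    set A : ℝ := -(q * g t ^ (q - 1) * (P / g t)) / (1 + g t ^ q) ^ 2 with hAdef
    have hhder : HasDerivAt (fun s => (1 + g s ^ q)⁻¹) A t :=
      (hrpow.const_add 1).inv h1pos.ne'
    set V : Fin d → ℝ := fun i => A * (c i * t + b i) + (1 + g t ^ q)⁻¹ * c i with hVdef
    have hΦ : HasDerivAt (fun s : ℝ =>
        (1 + Real.sqrt (∑ k, (c k * s + b k) ^ 2) ^ q)⁻¹
          • (fun k => c k * s + b k) : ℝ → (Fin d → ℝ)) V t := by
      apply hasDerivAt_pi.2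
      intro i
      show HasDerivAt (fun s => (1 + g s ^ q)⁻¹ * (c i * s + b i)) (V i) t
      exact hhder.mul (hu i)
    rw [hΦ.deriv]
    set B : ℝ := (1 + g t ^ q)⁻¹ - 1 with hBdef
    have hVi : ∀ i, V i - c i = A * (c i * t + b i) + B * c i := by
      intro i; rw [hVdef, hBdef]; ring
    set U : EuclideanSpace ℝ (Fin d) :=
      (WithLp.equiv 2 (Fin d → ℝ)).symm (fun k => c k * t + b k) with hUdef
    set C : EuclideanSpace ℝ (Fin d) := (WithLp.equiv 2 (Fin d → ℝ)).symm c with hCdef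
    have hUnorm : ‖U‖ = g t := (sqrt_sum_sq_eq_norm _).symm
    set N : ℝ := Real.sqrt (∑ i, c i ^ 2) with hNdef
    have hCnorm : ‖C‖ = N := (sqrt_sum_sq_eq_norm _).symm
    have hN0 : 0 ≤ N := Real.sqrt_nonneg _
    have hgq0 : 0 ≤ g t ^ q := Real.rpow_nonneg hg0 q
    -- Cauchy-Schwarz
    have hPinner : P = inner ℝ U C := by
      rw [hPdef, hUdef, hCdef]
      simp [PiLp.inner_apply, RCLike.inner_apply]
      exact Finset.sum_congr rfl fun k _ => mul_comm _ _
    have hPbound : |P| ≤ g t * N := by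
      rw [hPinner, ← hUnorm, ← hCnorm]
      exact abs_real_inner_le_norm U C
    -- bound |A|
    have hq1 : 0 ≤ g t ^ (q - 1) := Real.rpow_nonneg hg0 _
    have hAbound : |A| * g t ≤ q * g t ^ q * N := by
      have h1 : |A| = q * g t ^ (q - 1) * (|P| / g t) / (1 + g t ^ q) ^ 2 := by
        rw [hAdef, abs_div, abs_neg, abs_mul, abs_mul, abs_div,
          abs_of_nonneg (by linarith : (0:ℝ) ≤ q), abs_of_nonneg hq1,
          abs_of_pos hgpos, abs_of_pos (pow_pos h1pos 2)]
      have h2 : |A| ≤ q * g t ^ (q - 1) * (|P| / g t) := by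
        rw [h1]
        apply div_le_self
        · positivity
        · nlinarith
      have h3 : q * g t ^ (q - 1) * (|P| / g t) * g t = q * g t ^ (q - 1) * |P| := by
        field_simp
      have h4 : q * g t ^ (q - 1) * |P| ≤ q * g t ^ (q - 1) * (g t * N) := by
        apply mul_le_mul_of_nonneg_left hPbound
        positivity
      have h5 : g t ^ (q - 1) * g t = g t ^ q := by
        rw [Real.rpow_sub hgpos, Real.rpow_one]
        field_simp
      calc |A| * g t ≤ q * g t ^ (q - 1) * (|P| / g t) * g t := by
            apply mul_le_mul_of_nonneg_right h2 hg0
          _ = q * g t ^ (q - 1) * |P| := h3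
          _ ≤ q * g t ^ (q - 1) * (g t * N) := h4
          _ = q * g t ^ q * N := by rw [← h5]; ring
    -- bound |B|
    have hBbound : |B| ≤ g t ^ q := by
      have hle : (1 + g t ^ q)⁻¹ ≤ 1 := by
        rw [inv_le_one_iff₀]; right; linarith
      rw [hBdef, abs_of_nonpos (by linarith)]
      have heq : 1 - (1 + g t ^ q)⁻¹ = g t ^ q / (1 + g t ^ q) := by
        field_simp
        ring
      rw [neg_sub, heq]
      exact div_le_self hgq0 (by linarith)
    -- assemble
    calc Real.sqrt (∑ i, (V i - c i) ^ 2)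
        = ‖A • U + B • C‖ := by
          rw [show (∑ i, (V i - c i) ^ 2) = ∑ i, ((A • U + B • C) i) ^ 2 from ?_]
          · exact sqrt_sum_sq_eq_norm (fun i => (A • U + B • C) i)
          · apply Finset.sum_congr rfl
            intro i _
            rw [hVi i]
            rfl
      _ ≤ ‖A • U‖ + ‖B • C‖ := norm_add_le _ _
      _ = |A| * g t + |B| * N := by
          rw [norm_smul, norm_smul, hUnorm, hCnorm, Real.norm_eq_abs, Real.norm_eq_abs]
      _ ≤ q * g t ^ q * N + g t ^ q * N := by
          apply add_le_add hAbound
          exact mul_le_mul_of_nonneg_right hBbound hN0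
      _ = (q + 1) * g t ^ q * N := by ring

/-- For the increment-tamed map `Φ(x,t,y) = (μ(x)t + σ(x)y)/(1 + ‖μ(x)t + σ(x)y‖^q)`,
`‖(∂Φ/∂t)(x,t,y) − μ(x)‖ ≤ (q+1) ‖μ(x)t + σ(x)y‖^q ‖μ(x)‖`. -/
theorem tamed_increment_time_derivative_bound
    (d m : ℕ) (q : ℝ) (hq : 1 ≤ q)
    (μ : (Fin d → ℝ) → (Fin d → ℝ)) (σ : (Fin d → ℝ) → Matrix (Fin d) (Fin m) ℝ)
    (x : Fin d → ℝ) (t : ℝ) (ht : 0 < t) (y : Fin m → ℝ) :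
    Real.sqrt (∑ i,
        ((deriv (fun s : ℝ =>
            (1 + Real.sqrt (∑ k, (μ x k * s + (σ x).mulVec y k) ^ 2) ^ q)⁻¹
              • (fun k => μ x k * s + (σ x).mulVec y k) : ℝ → (Fin d → ℝ)) t) i
          - μ x i) ^ 2)
      ≤ (q + 1) * Real.sqrt (∑ k, (μ x k * t + (σ x).mulVec y k) ^ 2) ^ q
          * Real.sqrt (∑ i, (μ x i) ^ 2) :=
  main_aux q hq (μ x) ((σ x).mulVec y) t
end

section
/- Let q ∈ [1,∞), d, m ∈ ℕ, μ : ℝ^d → ℝ^d and σ : ℝ^d → ℝ^{d×m}, and define Φ(x,t,y) = (μ(x)t + σ(x)y)/(1 + ‖μ(x)t + σ(x)y‖^q) for t ∈ (0,∞), x ∈ ℝ^d, y ∈ ℝ^m. Then ‖((∂/∂y)Φ)(x,t,y) − σ(x)‖_{HS} ≤ (q+1)·‖μ(x)t + σ(x)y‖^q · ‖σ(x)‖_{HS} for all x, t, y. -/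
open Finset Filter Topology

lemma sqrt_sum_sq_add_le' {ι : Type*} [Fintype ι] (f g : ι → ℝ) :
    Real.sqrt (∑ i, (f i + g i)^2) ≤ Real.sqrt (∑ i, (f i)^2) + Real.sqrt (∑ i, (g i)^2) := by
  have h := norm_add_le (E := EuclideanSpace ℝ ι) ((WithLp.equiv 2 _).symm f) ((WithLp.equiv 2 _).symm g)
  simpa [EuclideanSpace.norm_eq, Real.norm_eq_abs, sq_abs] using h

lemma sqrt_dsum_sq_add_le {d m : ℕ} (f g : Fin d → Fin m → ℝ) :
    Real.sqrt (∑ i, ∑ j, (f i j + g i j)^2)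
      ≤ Real.sqrt (∑ i, ∑ j, (f i j)^2) + Real.sqrt (∑ i, ∑ j, (g i j)^2) := by
  have h := sqrt_sum_sq_add_le' (ι := Fin d × Fin m) (fun p => f p.1 p.2) (fun p => g p.1 p.2)
  simpa [Fintype.sum_prod_type] using h

set_option maxHeartbeats 1600000 in
/-- For the increment-tamed map `Φ(x,t,y) = (μ(x)t + σ(x)y)/(1 + ‖μ(x)t + σ(x)y‖^q)`,
the Jacobian in `y` satisfies `‖(∂Φ/∂y)(x,t,y) − σ(x)‖_HS ≤ (q+1) ‖μ(x)t + σ(x)y‖^q ‖σ(x)‖_HS`. -/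
theorem tamed_increment_space_derivative_bound
    (d m : ℕ) (q : ℝ) (hq : 1 ≤ q)
    (μ : (Fin d → ℝ) → (Fin d → ℝ)) (σ : (Fin d → ℝ) → Matrix (Fin d) (Fin m) ℝ)
    (x : Fin d → ℝ) (t : ℝ) (ht : 0 < t) (y : Fin m → ℝ) :
    Real.sqrt (∑ i, ∑ j,
        ((fderiv ℝ (fun w : Fin m → ℝ =>
            (1 + Real.sqrt (∑ k, (μ x k * t + (σ x).mulVec w k) ^ 2) ^ q)⁻¹
              • (fun k => μ x k * t + (σ x).mulVec w k) : (Fin m → ℝ) → (Fin d → ℝ)) y)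
            (Pi.single j 1) i - σ x i j) ^ 2)
      ≤ (q + 1) * Real.sqrt (∑ k, (μ x k * t + (σ x).mulVec y k) ^ 2) ^ q
          * Real.sqrt (∑ i, ∑ j, (σ x i j) ^ 2) := by
  classical
  have hq0 : (0:ℝ) < q := lt_of_lt_of_le one_pos hq
  set A : (Fin m → ℝ) →L[ℝ] (Fin d → ℝ) :=
    LinearMap.toContinuousLinearMap ((σ x).mulVecLin) with hAdef
  have hAapp : ∀ w, A w = (σ x).mulVec w := by intro w; simp [hAdef]
  have hAsingle : ∀ j i, A (Pi.single j 1) i = σ x i j := by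
    intro j i; rw [hAapp]; simp [Matrix.mulVec_single]
  have hvk : ∀ (k : Fin d) (w : Fin m → ℝ),
      HasFDerivAt (fun w : Fin m → ℝ => μ x k * t + (σ x).mulVec w k)
        ((ContinuousLinearMap.proj k).comp A) w := by
    intro k w
    have h1 : HasFDerivAt (fun w : Fin m → ℝ => (σ x).mulVec w k)
        ((ContinuousLinearMap.proj k).comp A) w := by
      have h2 := ((ContinuousLinearMap.proj (R := ℝ) (φ := fun _ : Fin d => ℝ) k).comp A).hasFDerivAt (x := w)
      have : (fun w : Fin m → ℝ => (σ x).mulVec w k)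
          = ⇑((ContinuousLinearMap.proj (R := ℝ) (φ := fun _ : Fin d => ℝ) k).comp A) := by
        funext w; simp [hAapp]
      rw [this]; exact h2
    exact h1.const_add _
  have hvfull : ∀ w : Fin m → ℝ,
      HasFDerivAt (fun w : Fin m → ℝ => (fun k => μ x k * t + (σ x).mulVec w k : Fin d → ℝ)) A w := by
    intro w
    rw [hasFDerivAt_pi']
    intro k
    exact hvk k w
  set vy : Fin d → ℝ := fun k => μ x k * t + (σ x).mulVec y k with hvy
  set s : ℝ := ∑ k, (vy k)^2 with hs
  have hs0 : 0 ≤ s := Finset.sum_nonneg fun k _ => sq_nonneg _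
  set K : ℝ := Real.sqrt (∑ i, ∑ j, (σ x i j) ^ 2) with hK
  have hK0 : 0 ≤ K := Real.sqrt_nonneg _
  rcases eq_or_lt_of_le hs0 with hzero | hpos
  · -- degenerate case : vy = 0, derivative is A
    have hvy0 : ∀ k, vy k = 0 := by
      intro k
      have h := (Finset.sum_eq_zero_iff_of_nonneg (fun k _ => sq_nonneg (vy k))).1 hzero.symm k (mem_univ k)
      exact pow_eq_zero_iff (n := 2) (by norm_num) |>.1 h
    set C : ℝ := Real.sqrt (∑ k, (∑ l, |σ x k l|)^2) with hC
    have hC0 : 0 ≤ C := Real.sqrt_nonneg _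
    have hvnorm : ∀ (h : Fin m → ℝ),
        Real.sqrt (∑ k, ((σ x).mulVec h k)^2) ≤ C * ‖h‖ := by
      intro h
      have h1 : ∀ k, ((σ x).mulVec h k)^2 ≤ ((∑ l, |σ x k l|) * ‖h‖)^2 := by
        intro k
        have habs : |(σ x).mulVec h k| ≤ (∑ l, |σ x k l|) * ‖h‖ := by
          calc |(σ x).mulVec h k| = |∑ l, σ x k l * h l| := by
                rw [Matrix.mulVec]; rfl
          _ ≤ ∑ l, |σ x k l * h l| := Finset.abs_sum_le_sum_abs _ _
          _ ≤ ∑ l, |σ x k l| * ‖h‖ := Finset.sum_le_sum (fun l _ => by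
                rw [abs_mul]
                exact mul_le_mul_of_nonneg_left
                  (by simpa [Real.norm_eq_abs] using norm_le_pi_norm h l) (abs_nonneg _))
          _ = (∑ l, |σ x k l|) * ‖h‖ := (Finset.sum_mul _ _ _).symm
        calc ((σ x).mulVec h k)^2 = |(σ x).mulVec h k|^2 := (sq_abs _).symm
        _ ≤ ((∑ l, |σ x k l|) * ‖h‖)^2 := by
              apply pow_le_pow_left₀ (abs_nonneg _) habs
      calc Real.sqrt (∑ k, ((σ x).mulVec h k)^2)
          ≤ Real.sqrt (∑ k, ((∑ l, |σ x k l|) * ‖h‖)^2) :=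
            Real.sqrt_le_sqrt (Finset.sum_le_sum fun k _ => h1 k)
      _ = Real.sqrt ((∑ k, (∑ l, |σ x k l|)^2) * ‖h‖^2) := by
            congr 1
            rw [Finset.sum_mul]
            exact Finset.sum_congr rfl fun k _ => by ring
      _ = C * ‖h‖ := by
            rw [Real.sqrt_mul (by positivity), Real.sqrt_sq (norm_nonneg _), hC]
    have hvsum : ∀ (h : Fin m → ℝ) (k : Fin d),
        μ x k * t + (σ x).mulVec (y + h) k = (σ x).mulVec h k := by
      intro h k
      have hm : (σ x).mulVec (y + h) = (σ x).mulVec y + (σ x).mulVec h :=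
        Matrix.mulVec_add _ _ _
      have h0 : μ x k * t + (σ x).mulVec y k = 0 := hvy0 k
      rw [hm]
      simp only [Pi.add_apply]
      linarith
    have hFy : (1 + Real.sqrt (∑ k, (μ x k * t + (σ x).mulVec y k)^2) ^ q)⁻¹
        • (fun k => μ x k * t + (σ x).mulVec y k : Fin d → ℝ) = (0 : Fin d → ℝ) := by
      funext k
      have h0 : μ x k * t + (σ x).mulVec y k = 0 := hvy0 k
      simp [h0]
    have hDer : HasFDerivAt (fun w : Fin m → ℝ =>
        (1 + Real.sqrt (∑ k, (μ x k * t + (σ x).mulVec w k) ^ 2) ^ q)⁻¹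
          • (fun k => μ x k * t + (σ x).mulVec w k) : (Fin m → ℝ) → (Fin d → ℝ)) A y := by
      rw [hasFDerivAt_iff_isLittleO_nhds_zero]
      rw [Asymptotics.isLittleO_iff]
      intro c hc
      have t1 : Tendsto (fun h : Fin m → ℝ => ‖h‖) (𝓝 0) (𝓝 0) := tendsto_norm_zero
      have t2 : Tendsto (fun r : ℝ => r ^ q) (𝓝[≥] 0) (𝓝 0) := by
        have := (Real.continuousAt_rpow_const 0 q (Or.inr hq0.le)).tendsto
        rw [Real.zero_rpow hq0.ne'] at this
        exact this.mono_left nhdsWithin_le_nhds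
      have t3 : Tendsto (fun h : Fin m → ℝ => ‖h‖ ^ q) (𝓝 0) (𝓝 0) := by
        apply t2.comp
        exact tendsto_nhdsWithin_iff.2 ⟨t1, Eventually.of_forall fun h => norm_nonneg h⟩
      have t4 : Tendsto (fun h : Fin m → ℝ => (C^q * C) * ‖h‖ ^ q) (𝓝 0) (𝓝 0) := by
        have := t3.const_mul (C^q * C)
        simpa using this
      have hev : ∀ᶠ (h : Fin m → ℝ) in 𝓝 0, (C^q * C) * ‖h‖ ^ q < c :=
        t4.eventually_lt_const hc
      filter_upwards [hev] with h hh
      -- bound the expression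
      have hexp : (fun k => μ x k * t + (σ x).mulVec (y + h) k : Fin d → ℝ)
          = (σ x).mulVec h := funext (hvsum h)
      set nh : ℝ := Real.sqrt (∑ k, ((σ x).mulVec h k)^2) with hnh
      have hnh0 : 0 ≤ nh := Real.sqrt_nonneg _
      have honeq : (0:ℝ) < 1 + nh ^ q := by positivity
      have hEq : (1 + Real.sqrt (∑ k, (μ x k * t + (σ x).mulVec (y + h) k) ^ 2) ^ q)⁻¹
            • (fun k => μ x k * t + (σ x).mulVec (y + h) k : Fin d → ℝ)
          - (1 + Real.sqrt (∑ k, (μ x k * t + (σ x).mulVec y k) ^ 2) ^ q)⁻¹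
            • (fun k => μ x k * t + (σ x).mulVec y k : Fin d → ℝ)
          - A h
          = ((1 + nh ^ q)⁻¹ - 1) • (σ x).mulVec h := by
        have hsq : (∑ k, (μ x k * t + (σ x).mulVec (y+h) k)^2)
            = ∑ k, ((σ x).mulVec h k)^2 :=
          Finset.sum_congr rfl fun k _ => by rw [hvsum h k]
        rw [hFy, hexp, hAapp, sub_zero, sub_smul, one_smul, hsq]
      rw [hEq]
      have hnorm1 : ‖((1 + nh ^ q)⁻¹ - 1) • (σ x).mulVec h‖
          = |(1 + nh ^ q)⁻¹ - 1| * ‖(σ x).mulVec h‖ := by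
        rw [norm_smul, Real.norm_eq_abs]
      have habs1 : |(1 + nh ^ q)⁻¹ - 1| ≤ nh ^ q := by
        have hxq : 0 ≤ nh ^ q := Real.rpow_nonneg hnh0 q
        have h1 : (1 + nh ^ q)⁻¹ - 1 = -(nh ^ q / (1 + nh ^ q)) := by
          field_simp
          ring
        rw [h1, abs_neg, abs_of_nonneg (by positivity)]
        exact div_le_self hxq (by linarith)
      have hnorm2 : ‖(σ x).mulVec h‖ ≤ nh := by
        rw [pi_norm_le_iff_of_nonneg hnh0]
        intro k
        rw [Real.norm_eq_abs, ← Real.sqrt_sq_eq_abs]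
        exact Real.sqrt_le_sqrt (Finset.single_le_sum
          (f := fun k => ((σ x).mulVec h k)^2) (fun k _ => sq_nonneg _) (mem_univ k))
      have hnhC : nh ≤ C * ‖h‖ := hvnorm h
      have hnhq : nh ^ q ≤ C^q * ‖h‖^q := by
        calc nh ^ q ≤ (C * ‖h‖) ^ q := Real.rpow_le_rpow hnh0 hnhC hq0.le
        _ = C^q * ‖h‖^q := Real.mul_rpow hC0 (norm_nonneg _)
      calc ‖((1 + nh ^ q)⁻¹ - 1) • (σ x).mulVec h‖
          ≤ (C^q * ‖h‖^q) * (C * ‖h‖) := by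
            rw [hnorm1]
            exact mul_le_mul (habs1.trans hnhq) (hnorm2.trans hnhC) (norm_nonneg _)
              (by positivity)
      _ = ((C^q * C) * ‖h‖^q) * ‖h‖ := by ring
      _ ≤ c * ‖h‖ := mul_le_mul_of_nonneg_right hh.le (norm_nonneg _)
    rw [hDer.fderiv]
    have hL : ∑ i, ∑ j, ((A : (Fin m → ℝ) →L[ℝ] (Fin d → ℝ)) (Pi.single j 1) i - σ x i j)^2
        = 0 := by
      apply Finset.sum_eq_zero
      intro i _
      apply Finset.sum_eq_zero
      intro j _
      rw [hAsingle]
      ring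
    rw [hL, Real.sqrt_zero]
    have : (0:ℝ) ≤ Real.sqrt (∑ k, (μ x k * t + (σ x).mulVec y k) ^ 2) ^ q :=
      Real.rpow_nonneg (Real.sqrt_nonneg _) q
    positivity
  · -- main case
    set N := Real.sqrt s with hNdef
    have hN : 0 < N := Real.sqrt_pos.2 hpos
    have hsqrt : HasDerivAt Real.sqrt (1 / (2 * N)) s := Real.hasDerivAt_sqrt hpos.ne'
    have hrpow : HasDerivAt (fun r : ℝ => r ^ q) (q * N ^ (q-1)) N :=
      (Real.hasStrictDerivAt_rpow_const (Or.inl hN.ne')).hasDerivAt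
    have hcomp : HasDerivAt (fun r : ℝ => Real.sqrt r ^ q) (q * N ^ (q-1) * (1/(2*N))) s := by
      have := hrpow.comp s hsqrt
      exact this
    have hone : (0:ℝ) < 1 + N ^ q := by positivity
    have hinv : HasDerivAt (fun r : ℝ => (1 + Real.sqrt r ^ q)⁻¹)
        (-(q * N ^ (q-1) * (1/(2*N))) / (1 + N ^ q)^2) s := by
      have := (hcomp.const_add 1).inv hone.ne'
      exact this
    set ψ : ℝ := -(q * N ^ (q-1) * (1/(2*N))) / (1 + N ^ q)^2 with hψ
    set LS : (Fin m → ℝ) →L[ℝ] ℝ :=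
      ∑ k, (vy k • ((ContinuousLinearMap.proj k).comp A)
          + vy k • ((ContinuousLinearMap.proj k).comp A)) with hLS
    have hS : HasFDerivAt (fun w : Fin m → ℝ => ∑ k, (μ x k * t + (σ x).mulVec w k)^2) LS y := by
      have h := HasFDerivAt.fun_sum (u := (univ : Finset (Fin d)))
        (A := fun k w => (μ x k * t + (σ x).mulVec w k) * (μ x k * t + (σ x).mulVec w k))
        (fun k _ => (hvk k y).mul (hvk k y))
      simpa only [← pow_two] using h
    have hgy : HasFDerivAt (fun w : Fin m → ℝ =>
        (1 + Real.sqrt (∑ k, (μ x k * t + (σ x).mulVec w k)^2) ^ q)⁻¹) (ψ • LS) y := by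
      have := hinv.comp_hasFDerivAt y hS
      exact this
    have hF := hgy.fun_smul (hvfull y)
    set P : Fin m → ℝ := fun j => ∑ k, vy k * σ x k j with hPdef
    have hEntry : ∀ (i : Fin d) (j : Fin m), (fderiv ℝ (fun w : Fin m → ℝ =>
              (1 + Real.sqrt (∑ k, (μ x k * t + (σ x).mulVec w k) ^ 2) ^ q)⁻¹
                • (fun k => μ x k * t + (σ x).mulVec w k) : (Fin m → ℝ) → (Fin d → ℝ)) y)
              (Pi.single j 1) i
        = (1 + N ^ q)⁻¹ * σ x i j + (ψ * (2 * ∑ k, vy k * σ x k j)) * vy i := by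
      intro i j
      have hNs : Real.sqrt (∑ k, (μ x k * t + (σ x).mulVec y k)^2) = N := rfl
      have hLSapp : LS (Pi.single j 1) = 2 * ∑ k, vy k * σ x k j := by
        rw [hLS]
        simp [ContinuousLinearMap.sum_apply, ContinuousLinearMap.add_apply,
          ContinuousLinearMap.smul_apply, ContinuousLinearMap.comp_apply,
          ContinuousLinearMap.proj_apply, hAsingle, smul_eq_mul, two_mul,
          Finset.sum_add_distrib]
      rw [hF.fderiv]
      simp only [ContinuousLinearMap.add_apply, ContinuousLinearMap.coe_smul',
        ContinuousLinearMap.smulRight_apply, Pi.add_apply, Pi.smul_apply,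
        smul_eq_mul, hLSapp, hNs]
      rw [hAsingle]
    -- rewrite the double sum
    set c2 : ℝ := (1 + N ^ q)⁻¹ - 1 with hc2
    set c1 : ℝ := 2 * ψ with hc1
    have hrw : ∑ i, ∑ j, ((fderiv ℝ (fun w : Fin m → ℝ =>
              (1 + Real.sqrt (∑ k, (μ x k * t + (σ x).mulVec w k) ^ 2) ^ q)⁻¹
                • (fun k => μ x k * t + (σ x).mulVec w k) : (Fin m → ℝ) → (Fin d → ℝ)) y)
              (Pi.single j 1) i - σ x i j) ^ 2
        = ∑ i, ∑ j, (c1 * (P j * vy i) + c2 * σ x i j)^2 := by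
      refine Finset.sum_congr rfl fun i _ => Finset.sum_congr rfl fun j _ => ?_
      rw [hEntry i j]
      simp only [hc1, hc2, hPdef]
      ring
    rw [hrw]
    -- triangle inequality
    have htri := sqrt_dsum_sq_add_le (fun i j => c1 * (P j * vy i)) (fun i j => c2 * σ x i j)
    -- term A
    have hTA : ∑ i, ∑ j, (c1 * (P j * vy i))^2 = c1^2 * (s * ∑ j, (P j)^2) := by
      rw [hs, Finset.sum_mul_sum, Finset.mul_sum]
      refine Finset.sum_congr rfl fun i _ => ?_
      rw [Finset.mul_sum]
      refine Finset.sum_congr rfl fun j _ => ?_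
      ring
    have hPle : ∀ j, (P j)^2 ≤ s * ∑ k, (σ x k j)^2 := by
      intro j
      have h := Finset.sum_mul_sq_le_sq_mul_sq univ vy (fun k => σ x k j)
      rw [hs]
      exact h
    have hPsum : ∑ j, (P j)^2 ≤ s * ∑ i, ∑ j, (σ x i j)^2 := by
      calc ∑ j, (P j)^2 ≤ ∑ j, (s * ∑ k, (σ x k j)^2) := Finset.sum_le_sum fun j _ => hPle j
      _ = s * ∑ j, ∑ k, (σ x k j)^2 := by rw [Finset.mul_sum]
      _ = s * ∑ i, ∑ j, (σ x i j)^2 := by rw [Finset.sum_comm]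
    have hsqP : Real.sqrt (∑ j, (P j)^2) ≤ N * K := by
      calc Real.sqrt (∑ j, (P j)^2) ≤ Real.sqrt (s * ∑ i, ∑ j, (σ x i j)^2) :=
        Real.sqrt_le_sqrt hPsum
      _ = N * K := by rw [Real.sqrt_mul hs0, hNdef, hK]
    have hTA' : Real.sqrt (∑ i, ∑ j, (c1 * (P j * vy i))^2) ≤ |c1| * (N * (N * K)) := by
      rw [hTA, Real.sqrt_mul (sq_nonneg c1), Real.sqrt_sq_eq_abs,
        Real.sqrt_mul hs0, ← hNdef]
      gcongr
    -- |c1| computation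
    set c1' : ℝ := q * N ^ (q-1) * N⁻¹ / (1 + N ^ q)^2 with hc1'
    have hc1eq : c1 = -c1' := by
      rw [hc1, hψ, hc1']
      field_simp
    have habsc1 : |c1| = c1' := by
      rw [hc1eq, abs_neg, abs_of_nonneg]
      rw [hc1']
      positivity
    have hNq1 : N ^ (q-1) * N = N ^ q := by
      have h := Real.rpow_add hN (q-1) 1
      rw [sub_add_cancel, Real.rpow_one] at h
      exact h.symm
    have hc1N : c1' * (N * N) ≤ q * N ^ q := by
      have heq : c1' * (N * N) = q * N ^ q / (1 + N ^ q)^2 := by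
        calc c1' * (N * N) = q * (N ^ (q-1) * N) * (N⁻¹ * N) / (1 + N ^ q)^2 := by
              rw [hc1']; ring
        _ = q * N ^ q / (1 + N ^ q)^2 := by
              rw [hNq1, inv_mul_cancel₀ hN.ne', mul_one]
      rw [heq]
      apply div_le_self (by positivity)
      nlinarith [Real.rpow_nonneg (le_of_lt hN) q]
    -- term B
    have hTB : Real.sqrt (∑ i, ∑ j, (c2 * σ x i j)^2) = |c2| * K := by
      have h : ∑ i, ∑ j, (c2 * σ x i j)^2 = c2^2 * ∑ i, ∑ j, (σ x i j)^2 := by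
        rw [Finset.mul_sum]
        refine Finset.sum_congr rfl fun i _ => ?_
        rw [Finset.mul_sum]
        refine Finset.sum_congr rfl fun j _ => ?_
        ring
      rw [h, Real.sqrt_mul (sq_nonneg c2), Real.sqrt_sq_eq_abs, hK]
    have habsc2 : |c2| ≤ N ^ q := by
      have hxq : 0 ≤ N ^ q := Real.rpow_nonneg hN.le q
      have h1 : c2 = -(N ^ q / (1 + N ^ q)) := by
        rw [hc2]; field_simp
        ring
      rw [h1, abs_neg, abs_of_nonneg (by positivity)]
      exact div_le_self hxq (by linarith)
    -- combine
    have hfinal : Real.sqrt (∑ i, ∑ j, (c1 * (P j * vy i) + c2 * σ x i j)^2)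
        ≤ (q + 1) * N ^ q * K := by
      calc Real.sqrt (∑ i, ∑ j, (c1 * (P j * vy i) + c2 * σ x i j)^2)
          ≤ Real.sqrt (∑ i, ∑ j, (c1 * (P j * vy i))^2)
            + Real.sqrt (∑ i, ∑ j, (c2 * σ x i j)^2) := htri
      _ ≤ |c1| * (N * (N * K)) + |c2| * K := add_le_add hTA' (le_of_eq hTB)
      _ = (|c1| * (N * N)) * K + |c2| * K := by ring
      _ ≤ (q * N ^ q) * K + (N ^ q) * K := by
          have h1 : (|c1| * (N * N)) * K ≤ (q * N ^ q) * K :=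
            mul_le_mul_of_nonneg_right (by rw [habsc1]; exact hc1N) hK0
          have h2 : |c2| * K ≤ (N ^ q) * K :=
            mul_le_mul_of_nonneg_right habsc2 hK0
          linarith
      _ = (q + 1) * N ^ q * K := by ring
    exact hfinal
end

section
/- Let p, c ∈ [1,∞), let U ∈ C¹(ℝ^d, [0,∞)) satisfy ‖U'(x)‖ ≤ c(1 + U(x))^{1−1/p} for all x ∈ ℝ^d. Then for all x, y ∈ ℝ^d, 1 + U(x + y) ≤ c^p · 2^{p−1} · (1 + U(x) + ‖y‖^p). -/
open Real

lemma add_rpow_le_two_rpow_mul (a b p : ℝ) (ha : 0 ≤ a) (hb : 0 ≤ b) (hp : 1 ≤ p) :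
    (a + b) ^ p ≤ 2 ^ (p - 1) * (a ^ p + b ^ p) := by
  have h := NNReal.rpow_add_le_mul_rpow_add_rpow (⟨a, ha⟩) (⟨b, hb⟩) hp
  have h2 := NNReal.coe_le_coe.2 h
  push_cast [NNReal.coe_rpow] at h2
  exact h2

/-- If `U ∈ C¹(ℝ^d,[0,∞))` satisfies `‖U'(x)‖ ≤ c(1 + U(x))^(1−1/p)` for all `x`,
then `1 + U(x + y) ≤ c^p 2^(p−1) (1 + U(x) + ‖y‖^p)`. -/
theorem growth_bound_of_derivative_bound
    (d : ℕ) (p c : ℝ) (hp : 1 ≤ p) (hc : 1 ≤ c)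
    (U : EuclideanSpace ℝ (Fin d) → ℝ) (hU : ContDiff ℝ 1 U) (hU0 : ∀ x, 0 ≤ U x)
    (hgrad : ∀ x, ‖fderiv ℝ U x‖ ≤ c * (1 + U x) ^ (1 - 1 / p)) :
    ∀ x y : EuclideanSpace ℝ (Fin d),
      1 + U (x + y) ≤ c ^ p * 2 ^ (p - 1) * (1 + U x + ‖y‖ ^ p) := by
  intro x y
  have hp0 : 0 < p := lt_of_lt_of_le one_pos hp
  have hpos : ∀ z, 0 < 1 + U z := fun z => by linarith [hU0 z]
  set q : ℝ := 1 / p with hq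
  have hq0 : 0 < q := by positivity
  have hqp : q * p = 1 := one_div_mul_cancel (ne_of_gt hp0)
  set F : EuclideanSpace ℝ (Fin d) → ℝ := fun z => (1 + U z) ^ q with hF
  have hdiffU : Differentiable ℝ U := hU.differentiable one_ne_zero
  have hFderiv : ∀ z, HasFDerivAt F ((q * (1 + U z) ^ (q - 1)) • fderiv ℝ U z) z := by
    intro z
    have h1 : HasFDerivAt (fun w => 1 + U w) (fderiv ℝ U z) z :=
      (hdiffU z).hasFDerivAt.const_add 1
    exact h1.rpow_const (Or.inl (ne_of_gt (hpos z)))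
  have hbound : ∀ z, ‖(q * (1 + U z) ^ (q - 1)) • fderiv ℝ U z‖ ≤ c := by
    intro z
    rw [norm_smul]
    have h1 : 0 ≤ (1 + U z) ^ (q - 1) := rpow_nonneg (hpos z).le _
    have h2 : ‖q * (1 + U z) ^ (q - 1)‖ = q * (1 + U z) ^ (q - 1) := by
      rw [Real.norm_eq_abs, abs_of_nonneg (by positivity)]
    rw [h2]
    calc q * (1 + U z) ^ (q - 1) * ‖fderiv ℝ U z‖
        ≤ q * (1 + U z) ^ (q - 1) * (c * (1 + U z) ^ (1 - q)) := by
          apply mul_le_mul_of_nonneg_left (hgrad z) (by positivity)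
      _ = q * c * ((1 + U z) ^ (q - 1) * (1 + U z) ^ (1 - q)) := by ring
      _ = q * c := by
          rw [← Real.rpow_add (hpos z)]
          norm_num
      _ ≤ 1 * c := by
          apply mul_le_mul_of_nonneg_right _ (by linarith)
          rw [hq]
          exact div_le_one_of_le₀ hp hp0.le
      _ = c := one_mul c
  have hmv : ‖F (x + y) - F x‖ ≤ c * ‖(x + y) - x‖ := by
    apply Convex.norm_image_sub_le_of_norm_hasFDerivWithin_le (𝕜 := ℝ)
      (f' := fun z => (q * (1 + U z) ^ (q - 1)) • fderiv ℝ U z)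
      (fun z _ => (hFderiv z).hasFDerivWithinAt) (fun z _ => hbound z)
      convex_univ (Set.mem_univ x) (Set.mem_univ (x + y))
  rw [add_sub_cancel_left] at hmv
  have hmv2 : F (x + y) ≤ F x + c * ‖y‖ :=
    by linarith [le_abs_self (F (x + y) - F x), (abs_le.1 hmv).2]
  have hFnn : ∀ z, 0 ≤ F z := fun z => rpow_nonneg (hpos z).le _
  have hFp : ∀ z, (F z) ^ p = 1 + U z := by
    intro z
    simp only [hF]
    rw [← Real.rpow_mul (hpos z).le, hqp, Real.rpow_one]
  have hcy : 0 ≤ c * ‖y‖ := by positivity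
  have key : 1 + U (x + y) ≤ (F x + c * ‖y‖) ^ p := by
    rw [← hFp (x + y)]
    exact Real.rpow_le_rpow (hFnn _) hmv2 hp0.le
  have h2 : (F x + c * ‖y‖) ^ p ≤ 2 ^ (p - 1) * ((F x) ^ p + (c * ‖y‖) ^ p) :=
    add_rpow_le_two_rpow_mul _ _ p (hFnn x) hcy hp
  have h3 : (c * ‖y‖) ^ p = c ^ p * ‖y‖ ^ p :=
    Real.mul_rpow (by linarith) (norm_nonneg y)
  have hcp : (1 : ℝ) ≤ c ^ p := Real.one_le_rpow hc hp0.le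
  have h2pos : (0 : ℝ) < 2 ^ (p - 1) := Real.rpow_pos_of_pos two_pos _
  have hyp : (0 : ℝ) ≤ ‖y‖ ^ p := Real.rpow_nonneg (norm_nonneg y) p
  rw [hFp x, h3] at h2
  nlinarith [hU0 x, mul_le_mul_of_nonneg_right hcp (hU0 x)]
end

section
/- Let p, c ∈ [1,∞), i ∈ {0,1,2}, and U ∈ C^{i+1}(ℝ^d, [0,∞)) satisfy ‖U^{(j)}(x)‖ ≤ c(1 + U(x))^{max(1−j/p,0)} for all x ∈ ℝ^d and j ∈ {1,...,i+1}. Then for all x, y ∈ ℝ^d, ‖U^{(i)}(y) − U^{(i)}(x)‖ ≤ ((2c)^p / 2) · (1 + U(x)^{max(p−i−1,0)/p} + ‖y−x‖^{max(p−i−1,0)}) · ‖y − x‖. -/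
open Real Set

private lemma add_rpow_le_add_rpow' {a b θ : ℝ} (ha : 0 ≤ a) (hb : 0 ≤ b)
    (h0 : 0 ≤ θ) (h1 : θ ≤ 1) : (a + b) ^ θ ≤ a ^ θ + b ^ θ := by
  lift a to NNReal using ha
  lift b to NNReal using hb
  rw [← NNReal.coe_add, ← NNReal.coe_rpow, ← NNReal.coe_rpow, ← NNReal.coe_rpow,
    ← NNReal.coe_add, NNReal.coe_le_coe]
  exact NNReal.rpow_add_le_add_rpow a b h0 h1

/-- If `U ∈ C^(i+1)(ℝ^d,[0,∞))` with `i ∈ {0,1,2}` satisfies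
`‖U^(j)(x)‖ ≤ c(1 + U(x))^(max(1−j/p,0))` for `j ∈ {1,…,i+1}`, then
`‖U^(i)(y) − U^(i)(x)‖ ≤ ((2c)^p/2)(1 + U(x)^(max(p−i−1,0)/p) + ‖y−x‖^(max(p−i−1,0)))‖y−x‖`. -/
theorem iterated_deriv_difference_bound
    (d : ℕ) (p c : ℝ) (hp : 1 ≤ p) (hc : 1 ≤ c)
    (i : ℕ) (hi : i ≤ 2)
    (U : EuclideanSpace ℝ (Fin d) → ℝ) (hU : ContDiff ℝ (i + 1) U) (hU0 : ∀ x, 0 ≤ U x)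
    (hder : ∀ x, ∀ j : ℕ, 1 ≤ j → j ≤ i + 1 →
      ‖iteratedFDeriv ℝ j U x‖ ≤ c * (1 + U x) ^ (max (1 - (j : ℝ) / p) 0)) :
    ∀ x y : EuclideanSpace ℝ (Fin d),
      ‖iteratedFDeriv ℝ i U y - iteratedFDeriv ℝ i U x‖
        ≤ ((2 * c) ^ p / 2)
            * (1 + (U x) ^ (max (p - (i : ℝ) - 1) 0 / p)
                + ‖y - x‖ ^ (max (p - (i : ℝ) - 1) 0))
            * ‖y - x‖ := by
  have hp0 : (0:ℝ) < p := lt_of_lt_of_le one_pos hp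
  have hc0 : (0:ℝ) < c := lt_of_lt_of_le one_pos hc
  have hpos : ∀ z, (0:ℝ) < 1 + U z := fun z => by linarith [hU0 z]
  have hUdiff : Differentiable ℝ U := hU.differentiable (by simp)
  have hψder : ∀ z, HasFDerivAt (fun u => (1 + U u) ^ (1/p))
      (((1/p) * (1 + U z) ^ (1/p - 1)) • fderiv ℝ U z) z := by
    intro z
    have h2 : HasDerivAt (fun s : ℝ => 1 + s) 1 (U z) := (hasDerivAt_id _).const_add 1
    have h1 : HasDerivAt (fun s : ℝ => (1 + s) ^ (1/p))
        ((1/p) * (1 + U z) ^ (1/p - 1)) (U z) := by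
      have h3 := Real.hasDerivAt_rpow_const (x := 1 + U z) (p := 1/p)
        (Or.inl (hpos z).ne')
      simpa [Function.comp_def] using h3.comp (U z) h2
    simpa [Function.comp_def] using h1.comp_hasFDerivAt z (hUdiff z).hasFDerivAt
  have hfd1 : ∀ z, ‖fderiv ℝ U z‖ = ‖iteratedFDeriv ℝ 1 U z‖ := by
    intro z
    have h := norm_iteratedFDeriv_fderiv (𝕜 := ℝ) (f := U) (x := z) (n := 0)
    rw [norm_iteratedFDeriv_zero] at h
    simpa using h
  have hψbound : ∀ z, ‖((1/p) * (1 + U z) ^ (1/p - 1)) • fderiv ℝ U z‖ ≤ c := by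
    intro z
    have hmax1 : max (1 - (1:ℝ) / p) 0 = 1 - 1/p := by
      apply max_eq_left
      have h1p : 1/p ≤ 1 := by rw [div_le_one hp0]; exact hp
      linarith
    have hd1 : ‖iteratedFDeriv ℝ 1 U z‖ ≤ c * (1 + U z) ^ (1 - 1/p) := by
      have h := hder z 1 le_rfl (Nat.le_add_left 1 i)
      rw [Nat.cast_one, hmax1] at h
      exact h
    have ha : (0:ℝ) ≤ (1/p) * (1 + U z) ^ (1/p - 1) :=
      mul_nonneg (by positivity) (Real.rpow_nonneg (hpos z).le _)
    rw [norm_smul, Real.norm_eq_abs, abs_of_nonneg ha]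
    calc (1/p) * (1 + U z) ^ (1/p - 1) * ‖fderiv ℝ U z‖
        ≤ (1/p) * (1 + U z) ^ (1/p - 1) * (c * (1 + U z) ^ (1 - 1/p)) := by
          apply mul_le_mul_of_nonneg_left _ ha
          rw [hfd1 z]; exact hd1
      _ = (1/p) * c * ((1 + U z) ^ (1/p - 1) * (1 + U z) ^ (1 - 1/p)) := by ring
      _ = (1/p) * c := by rw [← Real.rpow_add (hpos z)]; norm_num
      _ ≤ 1 * c := by
          apply mul_le_mul_of_nonneg_right _ hc0.le
          rw [div_le_one hp0]; exact hp
      _ = c := one_mul c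
  have hψlip : ∀ z w : EuclideanSpace ℝ (Fin d),
      (1 + U w) ^ (1/p) ≤ (1 + U z) ^ (1/p) + c * ‖w - z‖ := by
    intro z w
    have h := convex_univ.norm_image_sub_le_of_norm_hasFDerivWithin_le
      (f := fun u => (1 + U u) ^ (1/p))
      (f' := fun u => ((1/p) * (1 + U u) ^ (1/p - 1)) • fderiv ℝ U u) (C := c)
      (fun u _ => (hψder u).hasFDerivWithinAt) (fun u _ => hψbound u)
      (mem_univ z) (mem_univ w)
    have h2 : (1 + U w) ^ (1/p) - (1 + U z) ^ (1/p)
        ≤ ‖(1 + U w) ^ (1/p) - (1 + U z) ^ (1/p)‖ := le_abs_self _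
    linarith
  intro x y
  set α := max (p - (i:ℝ) - 1) 0 with hα
  have hα0 : 0 ≤ α := le_max_right _ _
  have hαp : α ≤ p - 1 := by
    apply max_le _ (by linarith)
    have h0i : (0:ℝ) ≤ (i:ℝ) := Nat.cast_nonneg i
    linarith
  set r := ‖y - x‖ with hr
  have hr0 : (0:ℝ) ≤ r := norm_nonneg _
  set A := (1 + U x) ^ (1/p) with hA
  have hA0 : (0:ℝ) ≤ A := Real.rpow_nonneg (hpos x).le _
  set C := c * (A + c * r) ^ α with hC
  have hFdiff : Differentiable ℝ (iteratedFDeriv ℝ i U) :=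
    hU.differentiable_iteratedFDeriv (by exact_mod_cast Nat.lt_succ_self i)
  have key : ∀ z ∈ segment ℝ x y, ‖fderiv ℝ (iteratedFDeriv ℝ i U) z‖ ≤ C := by
    intro z hz
    have hzx : ‖z - x‖ ≤ r := by
      obtain ⟨a, b, ha, hb, hab, rfl⟩ := hz
      have hab' : a • x + b • y - x = b • (y - x) := by
        rw [show a = 1 - b by linarith]; module
      rw [hab', norm_smul, Real.norm_eq_abs, abs_of_nonneg hb]
      calc b * ‖y - x‖ ≤ 1 * ‖y - x‖ :=
            mul_le_mul_of_nonneg_right (by linarith) (norm_nonneg _)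
        _ = r := one_mul _
    have hψz : (1 + U z) ^ (1/p) ≤ A + c * r := by
      calc (1 + U z) ^ (1/p) ≤ A + c * ‖z - x‖ := hψlip x z
        _ ≤ A + c * r := by
            have := mul_le_mul_of_nonneg_left hzx hc0.le
            linarith
    have hmax : max (1 - ((i:ℝ)+1) / p) 0 = α / p := by
      rw [hα, ← max_div_div_right hp0.le, zero_div]
      congr 1
      rw [eq_div_iff hp0.ne']
      field_simp
      ring
    have hd := hder z (i+1) (Nat.le_add_left 1 i) le_rfl
    rw [norm_fderiv_iteratedFDeriv]
    calc ‖iteratedFDeriv ℝ (i + 1) U z‖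
        ≤ c * (1 + U z) ^ (max (1 - ((i:ℝ)+1) / p) 0) := by
          have hcast : ((i+1 : ℕ) : ℝ) = (i:ℝ) + 1 := by push_cast; ring
          rw [← hcast]; exact hd
      _ = c * ((1 + U z) ^ (1/p)) ^ α := by
          rw [hmax]
          congr 1
          rw [← Real.rpow_mul (hpos z).le]
          congr 1
          ring
      _ ≤ c * (A + c * r) ^ α := by
          apply mul_le_mul_of_nonneg_left _ hc0.le
          exact Real.rpow_le_rpow (Real.rpow_nonneg (hpos z).le _) hψz hα0
  have hmvt : ‖iteratedFDeriv ℝ i U y - iteratedFDeriv ℝ i U x‖ ≤ C * r :=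
    (convex_segment x y).norm_image_sub_le_of_norm_hasFDerivWithin_le
      (f' := fun u => fderiv ℝ (iteratedFDeriv ℝ i U) u)
      (fun u _ => (hFdiff u).hasFDerivAt.hasFDerivWithinAt) key
      (left_mem_segment ℝ x y) (right_mem_segment ℝ x y)
  refine hmvt.trans ?_
  apply mul_le_mul_of_nonneg_right _ hr0
  have hUx0 := hU0 x
  have h1 : A + c * r ≤ c * (A + r) := by nlinarith
  have h2 : (A + c * r) ^ α ≤ c ^ α * (A + r) ^ α := by
    rw [← Real.mul_rpow hc0.le (by linarith)]
    exact Real.rpow_le_rpow (by positivity) h1 hα0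
  have h3 : (A + r) ^ α ≤ 2 ^ α * (A ^ α + r ^ α) := by
    have hm : A + r ≤ 2 * max A r := by
      rcases le_total A r with h | h
      · rw [max_eq_right h]; linarith
      · rw [max_eq_left h]; linarith
    calc (A + r) ^ α ≤ (2 * max A r) ^ α :=
          Real.rpow_le_rpow (by linarith) hm hα0
      _ = 2 ^ α * (max A r) ^ α := Real.mul_rpow (by norm_num) (le_max_of_le_left hA0)
      _ ≤ 2 ^ α * (A ^ α + r ^ α) := by
          apply mul_le_mul_of_nonneg_left _ (Real.rpow_nonneg (by norm_num) _)
          rcases le_total A r with h | h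
          · rw [max_eq_right h]
            have := Real.rpow_nonneg hA0 α
            linarith
          · rw [max_eq_left h]
            have := Real.rpow_nonneg hr0 α
            linarith
  have h4 : A ^ α ≤ 1 + (U x) ^ (α / p) := by
    have hA2 : A ^ α = (1 + U x) ^ (α / p) := by
      rw [hA, ← Real.rpow_mul (hpos x).le]
      congr 1
      ring
    rw [hA2]
    have h := add_rpow_le_add_rpow' (by norm_num : (0:ℝ) ≤ 1) hUx0
      (by positivity : (0:ℝ) ≤ α / p) (by rw [div_le_one hp0]; linarith)
    simpa using h
  have h5 : c * (c ^ α * 2 ^ α) ≤ (2 * c) ^ p / 2 := by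
    have e3 : (2 * c) ^ p / 2 = c ^ p * 2 ^ (p - 1) := by
      rw [Real.mul_rpow (by norm_num) hc0.le, Real.rpow_sub (by norm_num : (0:ℝ) < 2),
        Real.rpow_one]
      ring
    have e4 : c * c ^ α = c ^ (1 + α) := by
      rw [Real.rpow_add hc0, Real.rpow_one]
    have e1 : c ^ (1 + α) ≤ c ^ p := Real.rpow_le_rpow_of_exponent_le hc (by linarith)
    have e2 : (2:ℝ) ^ α ≤ 2 ^ (p - 1) :=
      Real.rpow_le_rpow_of_exponent_le one_le_two hαp
    rw [e3]
    calc c * (c ^ α * 2 ^ α) = c ^ (1 + α) * 2 ^ α := by rw [← e4]; ring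
      _ ≤ c ^ p * 2 ^ (p - 1) :=
          mul_le_mul e1 e2 (Real.rpow_nonneg (by norm_num) _) (Real.rpow_nonneg hc0.le _)
  calc C = c * (A + c * r) ^ α := hC
    _ ≤ c * (c ^ α * (A + r) ^ α) := mul_le_mul_of_nonneg_left h2 hc0.le
    _ ≤ c * (c ^ α * (2 ^ α * (A ^ α + r ^ α))) := by
        apply mul_le_mul_of_nonneg_left _ hc0.le
        exact mul_le_mul_of_nonneg_left h3 (Real.rpow_nonneg hc0.le _)
    _ = (c * (c ^ α * 2 ^ α)) * (A ^ α + r ^ α) := by ring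
    _ ≤ ((2 * c) ^ p / 2) * (1 + (U x) ^ (α / p) + r ^ α) := by
        apply mul_le_mul h5 _ _ (by positivity)
        · have := Real.rpow_nonneg hr0 α
          linarith
        · have h6 := Real.rpow_nonneg hA0 α
          have h7 := Real.rpow_nonneg hr0 α
          linarith
end
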